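/- arXiv:2411.03026 — 4 statements merged into one kernel-verified Lean document; each statement's English description precedes it below -/
import Mathlib

section
/- For every intervention σ and every index ℓ ∈ {1,…,n}, the pass-throughs to the price and quantity of the eigenvector bundle u^ℓ satisfy u^ℓ·ṗ = −(1/(1 + |λ_ℓ|))·(u^ℓ·σ) and u^ℓ·q̇ = λ_ℓ·(u^ℓ·ṗ) = (|λ_ℓ|/(1 + |λ_ℓ|))·(u^ℓ·σ). -/
noncomputable section
open Matrix MeasureTheory Filter

/-- Vectors in `ℝⁿ` with the Euclidean norm/inner product. -/
abbrev Vec (n : ℕ) := EuclideanSpace ℝ (Fin n)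

variable {n : ℕ}

/-- Price effect `ṗ = −(I − D)⁻¹ σ`. -/
def pDot (D : Matrix (Fin n) (Fin n) ℝ) (σ : Vec n) : Vec n :=
  -(Matrix.toEuclideanLin (1 - D)⁻¹ σ)

/-- Quantity effect `q̇ = D ṗ`. -/
def qDot (D : Matrix (Fin n) (Fin n) ℝ) (σ : Vec n) : Vec n :=
  Matrix.toEuclideanLin D (pDot D σ)

/-- Expenditure derivative `Ṡ = σ·q⁰`. -/
def SDot (q σ : Vec n) : ℝ := inner ℝ σ q

/-- Consumer surplus derivative `Ċ = −q⁰·ṗ`. -/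
def CDot (D : Matrix (Fin n) (Fin n) ℝ) (q σ : Vec n) : ℝ := -(inner ℝ q (pDot D σ) : ℝ)

/-- Producer surplus derivative `Ṗ = 2 q⁰·q̇`. -/
def PDot (D : Matrix (Fin n) (Fin n) ℝ) (q σ : Vec n) : ℝ := 2 * (inner ℝ q (qDot D σ) : ℝ)

/-- Total surplus derivative `Ẇ = Ċ + Ṗ − Ṡ`. -/
def WDot (D : Matrix (Fin n) (Fin n) ℝ) (q σ : Vec n) : ℝ :=
  CDot D q σ + PDot D q σ - SDot q σ

/-- A normalized Slutsky matrix: symmetric, negative semidefinite, diagonal entries `−1`. -/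
def IsSlutsky (D : Matrix (Fin n) (Fin n) ℝ) : Prop :=
  D.IsSymm ∧ (-D).PosSemidef ∧ ∀ i, D i i = -1

/-- pass-through of an intervention to the price and quantity of each
eigenvector bundle:  u^l.pdot = -(1/(1+|lam_l|)) (u^l.sigma)  and
u^l.qdot = lam_l (u^l.pdot) = (|lam_l|/(1+|lam_l|)) (u^l.sigma). -/
theorem stmt2 (n : ℕ) (hn : 1 ≤ n) (D : Matrix (Fin n) (Fin n) ℝ) (hD : IsSlutsky D)
    (u : Fin n → Vec n) (lam : Fin n → ℝ)
    (hu : Orthonormal ℝ u)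
    (hspan : Submodule.span ℝ (Set.range u) = ⊤)
    (heig : ∀ ℓ, Matrix.toEuclideanLin D (u ℓ) = lam ℓ • u ℓ)
    (hneg : ∀ ℓ, lam ℓ ≤ 0) :
    ∀ (σ : Vec n) (ℓ : Fin n),
      (inner ℝ (u ℓ) (pDot D σ) : ℝ) = -(1 / (1 + |lam ℓ|)) * (inner ℝ (u ℓ) σ : ℝ) ∧
      (inner ℝ (u ℓ) (qDot D σ) : ℝ) = lam ℓ * (inner ℝ (u ℓ) (pDot D σ) : ℝ) ∧
      (inner ℝ (u ℓ) (qDot D σ) : ℝ) = (|lam ℓ| / (1 + |lam ℓ|)) * (inner ℝ (u ℓ) σ : ℝ) := by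
  intro σ ℓ
  have hHermD : D.IsHermitian := by
    have := hD.2.1.1
    simpa using this.neg
  have hHerm1D : (1 - D).IsHermitian := Matrix.IsHermitian.sub Matrix.isHermitian_one hHermD
  have hPD : (1 - D).PosDef := by
    have h := Matrix.PosDef.add_posSemidef (Matrix.PosDef.one (n := Fin n) (R := ℝ)) hD.2.1
    rwa [← sub_eq_add_neg] at h
  have hdet : IsUnit (1 - D).det := hPD.det_pos.ne'.isUnit
  have hmul : (1 - D) * (1 - D)⁻¹ = 1 := Matrix.mul_nonsing_inv _ hdet
  have hsymm1D : (Matrix.toEuclideanLin (1 - D)).IsSymmetric :=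
    Matrix.isHermitian_iff_isSymmetric.1 hHerm1D
  have hsymmD : (Matrix.toEuclideanLin D).IsSymmetric :=
    Matrix.isHermitian_iff_isSymmetric.1 hHermD
  have hl : lam ℓ ≤ 0 := hneg ℓ
  have habs : |lam ℓ| = -lam ℓ := abs_of_nonpos hl
  have hpos : (0:ℝ) < 1 - lam ℓ := by linarith
  -- eigenvector of 1 - D
  have heig1D : Matrix.toEuclideanLin (1 - D) (u ℓ) = (1 - lam ℓ) • u ℓ := by
    have h1 : Matrix.toEuclideanLin (1 : Matrix (Fin n) (Fin n) ℝ) (u ℓ) = u ℓ := by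
      ext i
      simp [Matrix.toEuclideanLin_apply, Matrix.one_mulVec]
    rw [map_sub, LinearMap.sub_apply, h1, heig ℓ, sub_smul, one_smul]
  set B : Matrix (Fin n) (Fin n) ℝ := (1 - D)⁻¹ with hB
  have hAB : ∀ x : Vec n, Matrix.toEuclideanLin (1 - D) (Matrix.toEuclideanLin B x) = x := by
    intro x
    have : Matrix.toEuclideanLin ((1 - D) * B) x = Matrix.toEuclideanLin (1:Matrix (Fin n) (Fin n) ℝ) x := by
      rw [hmul]
    simp only [Matrix.toEuclideanLin_apply, Matrix.mulVec_mulVec] at this ⊢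
    simpa using this
  have key : (inner ℝ (u ℓ) (Matrix.toEuclideanLin B σ) : ℝ)
      = (1 / (1 - lam ℓ)) * (inner ℝ (u ℓ) σ : ℝ) := by
    have h1 : (inner ℝ (u ℓ) σ : ℝ)
        = (1 - lam ℓ) * (inner ℝ (u ℓ) (Matrix.toEuclideanLin B σ) : ℝ) := by
      calc (inner ℝ (u ℓ) σ : ℝ)
          = inner ℝ (u ℓ) (Matrix.toEuclideanLin (1 - D) (Matrix.toEuclideanLin B σ)) := by
            rw [hAB σ]
        _ = inner ℝ (Matrix.toEuclideanLin (1 - D) (u ℓ)) (Matrix.toEuclideanLin B σ) :=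
            (hsymm1D _ _).symm
        _ = (1 - lam ℓ) * (inner ℝ (u ℓ) (Matrix.toEuclideanLin B σ) : ℝ) := by
            rw [heig1D, real_inner_smul_left]
    rw [h1]
    field_simp
  have hp : (inner ℝ (u ℓ) (pDot D σ) : ℝ) = -(1 / (1 + |lam ℓ|)) * (inner ℝ (u ℓ) σ : ℝ) := by
    rw [pDot, inner_neg_right, key, habs]
    ring_nf
  refine ⟨hp, ?_, ?_⟩
  · rw [qDot, ← hsymmD, heig ℓ, real_inner_smul_left]
  · rw [qDot, ← hsymmD, heig ℓ, real_inner_smul_left, hp, habs]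
    field_simp
end
end

section
/- For every intervention σ, expressed directly in terms of σ the surplus derivatives satisfy: Ṡ = Σ_{ℓ=1}^n (u^ℓ·q⁰)(u^ℓ·σ), Ċ = Σ_{ℓ=1}^n (1/(1 + |λ_ℓ|))·(u^ℓ·q⁰)(u^ℓ·σ), and Ẇ = Σ_{ℓ=1}^n (|λ_ℓ|/(1 + |λ_ℓ|))·(u^ℓ·q⁰)(u^ℓ·σ). -/
noncomputable section
open Matrix MeasureTheory Filter

variable {n : ℕ}

lemma toEuclideanLin_mul (A B : Matrix (Fin n) (Fin n) ℝ) (x : Vec n) :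
    Matrix.toEuclideanLin (A * B) x = Matrix.toEuclideanLin A (Matrix.toEuclideanLin B x) := by
  simp [Matrix.toEuclideanLin_apply, Matrix.mulVec_mulVec]

lemma toEuclideanLin_one' (x : Vec n) :
    Matrix.toEuclideanLin (1 : Matrix (Fin n) (Fin n) ℝ) x = x := by
  simp [Matrix.toEuclideanLin_apply]

/-- spectral decomposition of the surplus derivatives directly in terms
of the intervention. -/
theorem stmt4 (n : ℕ) (hn : 1 ≤ n) (D : Matrix (Fin n) (Fin n) ℝ) (hD : IsSlutsky D)
    (q : Vec n) (hq : ‖q‖ ≤ 1)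
    (u : Fin n → Vec n) (lam : Fin n → ℝ)
    (hu : Orthonormal ℝ u)
    (hspan : Submodule.span ℝ (Set.range u) = ⊤)
    (heig : ∀ ℓ, Matrix.toEuclideanLin D (u ℓ) = lam ℓ • u ℓ)
    (hneg : ∀ ℓ, lam ℓ ≤ 0) :
    ∀ σ : Vec n,
      SDot q σ = ∑ ℓ : Fin n, (inner ℝ (u ℓ) q : ℝ) * (inner ℝ (u ℓ) σ : ℝ) ∧
      CDot D q σ =
        ∑ ℓ : Fin n, (1 / (1 + |lam ℓ|)) * ((inner ℝ (u ℓ) q : ℝ) * (inner ℝ (u ℓ) σ : ℝ)) ∧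
      WDot D q σ =
        ∑ ℓ : Fin n, (|lam ℓ| / (1 + |lam ℓ|)) * ((inner ℝ (u ℓ) q : ℝ) * (inner ℝ (u ℓ) σ : ℝ)) := by
  let b : OrthonormalBasis (Fin n) ℝ (Vec n) := OrthonormalBasis.mk hu (le_of_eq hspan.symm)
  have hb : ∀ ℓ, b ℓ = u ℓ := fun ℓ => congrFun (OrthonormalBasis.coe_mk hu _) ℓ
  have hApos : (1 - D).PosDef := by
    rw [sub_eq_add_neg]
    exact Matrix.PosDef.add_posSemidef Matrix.PosDef.one hD.2.1
  have hinv : (1 - D)⁻¹ * (1 - D) = 1 :=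
    Matrix.nonsing_inv_mul _ (Matrix.isUnit_iff_isUnit_det _ |>.1 hApos.isUnit)
  have hlam1 : ∀ ℓ, (1 : ℝ) - lam ℓ ≠ 0 := fun ℓ => by nlinarith [hneg ℓ]
  have hAu : ∀ ℓ, Matrix.toEuclideanLin (1 - D) (u ℓ) = (1 - lam ℓ) • u ℓ := by
    intro ℓ
    have h0 : Matrix.toEuclideanLin (1 - D) (u ℓ)
        = Matrix.toEuclideanLin (1 : Matrix (Fin n) (Fin n) ℝ) (u ℓ)
          - Matrix.toEuclideanLin D (u ℓ) := by
      rw [map_sub]; rfl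
    rw [h0, heig, toEuclideanLin_one', sub_smul, one_smul]
  have hTu : ∀ ℓ, Matrix.toEuclideanLin (1 - D)⁻¹ (u ℓ) = (1 - lam ℓ)⁻¹ • u ℓ := by
    intro ℓ
    have h1 : Matrix.toEuclideanLin (1 - D)⁻¹ (Matrix.toEuclideanLin (1 - D) (u ℓ)) = u ℓ := by
      rw [← toEuclideanLin_mul, hinv, toEuclideanLin_one']
    rw [hAu, LinearMap.map_smul] at h1
    have h2 := congrArg (fun v => (1 - lam ℓ)⁻¹ • v) h1
    simpa [smul_smul, inv_mul_cancel₀ (hlam1 ℓ)] using h2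
  intro σ
  have hσ : σ = ∑ ℓ : Fin n, (inner ℝ (u ℓ) σ : ℝ) • u ℓ := by
    conv_lhs => rw [← b.sum_repr' σ]
    simp [hb]
  have hTσ : Matrix.toEuclideanLin (1 - D)⁻¹ σ
      = ∑ ℓ : Fin n, ((inner ℝ (u ℓ) σ : ℝ) * (1 - lam ℓ)⁻¹) • u ℓ := by
    conv_lhs => rw [hσ]
    rw [map_sum]
    refine Finset.sum_congr rfl fun ℓ _ => ?_
    rw [LinearMap.map_smul, hTu ℓ, smul_smul]
  have habs : ∀ ℓ, 1 + |lam ℓ| = 1 - lam ℓ := fun ℓ => by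
    rw [abs_of_nonpos (hneg ℓ)]; ring
  have hS : SDot q σ = ∑ ℓ : Fin n, (inner ℝ (u ℓ) q : ℝ) * (inner ℝ (u ℓ) σ : ℝ) := by
    have h3 := b.sum_inner_mul_inner σ q
    simp only [hb] at h3
    rw [SDot, ← h3]
    refine Finset.sum_congr rfl fun ℓ _ => ?_
    rw [real_inner_comm σ (u ℓ)]; ring
  have hC : CDot D q σ
      = ∑ ℓ : Fin n, (1 / (1 + |lam ℓ|)) * ((inner ℝ (u ℓ) q : ℝ) * (inner ℝ (u ℓ) σ : ℝ)) := by
    rw [CDot, pDot, hTσ, inner_neg_right, neg_neg, inner_sum]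
    refine Finset.sum_congr rfl fun ℓ _ => ?_
    rw [real_inner_smul_right, real_inner_comm q (u ℓ), habs]
    field_simp
  have hP : CDot D q σ + PDot D q σ - SDot q σ
      = ∑ ℓ : Fin n, ((1 - 2 * lam ℓ) / (1 - lam ℓ) - 1) * ((inner ℝ (u ℓ) q : ℝ) * (inner ℝ (u ℓ) σ : ℝ)) := by
    have hPv : PDot D q σ
        = ∑ ℓ : Fin n, (-2 * lam ℓ / (1 - lam ℓ)) * ((inner ℝ (u ℓ) q : ℝ) * (inner ℝ (u ℓ) σ : ℝ)) := by
      rw [PDot, qDot, pDot, hTσ, map_neg, map_sum, inner_neg_right, inner_sum,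
        ← Finset.sum_neg_distrib, Finset.mul_sum]
      refine Finset.sum_congr rfl fun ℓ _ => ?_
      rw [LinearMap.map_smul, heig, smul_smul, real_inner_smul_right, real_inner_comm q (u ℓ)]
      field_simp
    rw [hC, hPv, hS, ← Finset.sum_add_distrib, ← Finset.sum_sub_distrib]
    refine Finset.sum_congr rfl fun ℓ _ => ?_
    rw [habs]
    field_simp
    ring
  refine ⟨hS, hC, ?_⟩
  rw [WDot, hP]
  refine Finset.sum_congr rfl fun ℓ _ => ?_
  rw [abs_of_nonpos (hneg ℓ)]
  have h4 := hlam1 ℓ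
  have h5 : 1 + -lam ℓ = 1 - lam ℓ := by ring
  rw [h5]
  field_simp
  ring
end
end

section
/- For the intervention σ = u¹ (the first eigenvector of D), the price and quantity of the bundle u¹ change by u¹·ṗ = −1/(1 + |λ₁|) and u¹·q̇ = |λ₁|/(1 + |λ₁|), and the surplus derivatives satisfy Ċ = Ṡ/(1 + |λ₁|) and Ṗ = 2·(|λ₁|/(1 + |λ₁|))·Ṡ, where Ṡ = u¹·q⁰. -/
noncomputable section
open Matrix MeasureTheory Filter

variable {n : ℕ}

/-- the first-eigenvector intervention: price and quantity of the bundle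
u^1 change by -1/(1+|lam_1|) and |lam_1|/(1+|lam_1|), and the surplus derivatives
satisfy Cdot = Sdot/(1+|lam_1|) and Pdot = 2 (|lam_1|/(1+|lam_1|)) Sdot,
where Sdot = u^1 . q0. -/
theorem stmt5 (n : ℕ) (hn : 1 ≤ n) (D : Matrix (Fin n) (Fin n) ℝ) (hD : IsSlutsky D)
    (q : Vec n) (hq : ‖q‖ ≤ 1)
    (u : Fin n → Vec n) (lam : Fin n → ℝ)
    (hu : Orthonormal ℝ u)
    (hspan : Submodule.span ℝ (Set.range u) = ⊤)
    (heig : ∀ ℓ, Matrix.toEuclideanLin D (u ℓ) = lam ℓ • u ℓ)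
    (hneg : ∀ ℓ, lam ℓ ≤ 0)
    (horder : ∀ k ℓ : Fin n, k ≤ ℓ → |lam ℓ| ≤ |lam k|)
    (h1 : 0 < n) :
    (inner ℝ (u ⟨0, h1⟩) (pDot D (u ⟨0, h1⟩)) : ℝ) = -(1 / (1 + |lam ⟨0, h1⟩|)) ∧
    (inner ℝ (u ⟨0, h1⟩) (qDot D (u ⟨0, h1⟩)) : ℝ) = |lam ⟨0, h1⟩| / (1 + |lam ⟨0, h1⟩|) ∧
    SDot q (u ⟨0, h1⟩) = (inner ℝ (u ⟨0, h1⟩) q : ℝ) ∧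
    CDot D q (u ⟨0, h1⟩) = SDot q (u ⟨0, h1⟩) / (1 + |lam ⟨0, h1⟩|) ∧
    PDot D q (u ⟨0, h1⟩) = 2 * (|lam ⟨0, h1⟩| / (1 + |lam ⟨0, h1⟩|)) * SDot q (u ⟨0, h1⟩) := by
  set i : Fin n := ⟨0, h1⟩
  set L : ℝ := lam i with hL
  have hLle : L ≤ 0 := hneg i
  have habs : |L| = -L := abs_of_nonpos hLle
  have hpos : (0:ℝ) < 1 + |L| := by positivity
  have h1L : (1 : ℝ) - L = 1 + |L| := by rw [habs]; ring
  have h1Lpos : (0:ℝ) < 1 - L := by rw [h1L]; exact hpos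
  -- 1 - D is positive definite
  have hA : (1 - D).PosDef := by
    have : (1 - D) = 1 + (-D) := sub_eq_add_neg 1 D
    rw [this]
    exact Matrix.PosDef.add_posSemidef Matrix.PosDef.one hD.2.1
  have hdet : IsUnit (1 - D).det := hA.det_pos.ne'.isUnit
  -- applying 1 - D to u i
  have hAu : Matrix.toEuclideanLin (1 - D) (u i) = (1 - L) • u i := by
    have h1u : Matrix.toEuclideanLin (1 : Matrix (Fin n) (Fin n) ℝ) (u i) = u i := by
      simp [Matrix.toEuclideanLin_apply, Matrix.one_mulVec]
    rw [map_sub, LinearMap.sub_apply, h1u, heig i, sub_smul, one_smul]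
  -- composition law
  have hcomp : Matrix.toEuclideanLin (1 - D)⁻¹ (Matrix.toEuclideanLin (1 - D) (u i)) = u i := by
    simp only [Matrix.toEuclideanLin_apply, Equiv.apply_symm_apply]
    rw [Matrix.mulVec_mulVec, Matrix.nonsing_inv_mul _ hdet, Matrix.one_mulVec]
  -- inverse applied to u i
  have hinvu : Matrix.toEuclideanLin (1 - D)⁻¹ (u i) = (1 - L)⁻¹ • u i := by
    have := hcomp
    rw [hAu, LinearMap.map_smul] at this
    have h2 : Matrix.toEuclideanLin (1 - D)⁻¹ (u i)
        = (1 - L)⁻¹ • ((1 - L) • Matrix.toEuclideanLin (1 - D)⁻¹ (u i)) := by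
      rw [smul_smul, inv_mul_cancel₀ h1Lpos.ne', one_smul]
    rw [h2, this]
  have hpdot : pDot D (u i) = -((1 - L)⁻¹ • u i) := by
    rw [pDot, hinvu]
  have hqdot : qDot D (u i) = ((-L) * (1 - L)⁻¹) • u i := by
    rw [qDot, hpdot, map_neg, LinearMap.map_smul, heig i, smul_smul]
    rw [← neg_smul]
    ring_nf
    rw [← hL, mul_comm]
  have huu : (inner ℝ (u i) (u i) : ℝ) = 1 := by
    have := hu.1 i
    rw [real_inner_self_eq_norm_sq, this]; norm_num
  refine ⟨?_, ?_, ?_, ?_, ?_⟩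
  · rw [hpdot, inner_neg_right, real_inner_smul_right, huu, h1L]
    rw [mul_one, one_div]
  · rw [hqdot, real_inner_smul_right, huu, h1L, habs]
    ring
  · rw [SDot, real_inner_comm]
  · rw [CDot, SDot, hpdot, inner_neg_right, real_inner_smul_right, h1L, real_inner_comm]
    field_simp
  · rw [PDot, SDot, hqdot, real_inner_smul_right, h1L, habs, real_inner_comm]
    ring
end
end

section
/- Let M̲ > 0, let L̲ = L(D, M̲), and let V be any linear subspace of ℝⁿ. If the intervention σ lies in V, then for every vector q^h ∈ ℝⁿ (a household quantity vector) the household consumer surplus derivative Ċ^h = −q^h·ṗ satisfies |Ċ^h| ≤ ‖q^h‖·( ‖σ‖/(1 + M̲) + ‖P⊥_{L̲} P_V‖·‖σ‖ ). -/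
noncomputable section
open Matrix MeasureTheory Filter

variable {n : ℕ}

/-- The span of the eigenvectors of a matrix whose eigenvalues are at least `M`
in absolute value. -/
def eigSpan (A : Matrix (Fin n) (Fin n) ℝ) (M : ℝ) : Submodule ℝ (Vec n) :=
  ⨆ μ ∈ {μ : ℝ | M ≤ |μ|}, Module.End.eigenspace (Matrix.toEuclideanLin A) μ

/-- Orthogonal projection onto a subspace, as a map into the ambient space. -/
def projVec (V : Submodule ℝ (Vec n)) (x : Vec n) : Vec n :=
  (V.orthogonalProjection x : Vec n)

/-- Orthogonal projection onto a subspace, as a continuous linear endomorphism. -/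
def projCLM (V : Submodule ℝ (Vec n)) : Vec n →L[ℝ] Vec n :=
  V.subtypeL.comp (V.orthogonalProjection)

/-- Spectral (operator) norm of a matrix. -/
def specNorm (A : Matrix (Fin n) (Fin n) ℝ) : ℝ :=
  ‖LinearMap.toContinuousLinearMap (Matrix.toEuclideanLin A)‖

/-- Parseval's identity for an orthonormal basis of `Vec n`. -/
lemma stmt7_parseval {n : ℕ} (b : OrthonormalBasis (Fin n) ℝ (Vec n)) (y : Vec n) :
    ‖y‖ ^ 2 = ∑ i, (inner ℝ (b i) y : ℝ) ^ 2 := by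
  have h : ‖y‖ = ‖b.repr y‖ := (b.repr.norm_map y).symm
  rw [h, EuclideanSpace.norm_eq, Real.sq_sqrt (by positivity)]
  refine Finset.sum_congr rfl fun i _ => ?_
  rw [b.repr_apply_apply, Real.norm_eq_abs, sq_abs]

/-- Norm comparison through coefficients in an orthonormal basis. -/
lemma stmt7_norm_le_of_coef {n : ℕ} (b : OrthonormalBasis (Fin n) ℝ (Vec n))
    (y x : Vec n) (c : ℝ) (hc : 0 ≤ c)
    (h : ∀ i, ((inner ℝ (b i) y : ℝ)) ^ 2 ≤ c ^ 2 * ((inner ℝ (b i) x : ℝ)) ^ 2) :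
    ‖y‖ ≤ c * ‖x‖ := by
  have h2 : ‖y‖ ^ 2 ≤ (c * ‖x‖) ^ 2 := by
    rw [stmt7_parseval b y, mul_pow, stmt7_parseval b x, Finset.mul_sum]
    exact Finset.sum_le_sum fun i _ => h i
  exact le_of_pow_le_pow_left₀ two_ne_zero (by positivity) h2

/-- if the intervention lies in a subspace V, then every household
consumer-surplus derivative is bounded by
norm(qh) * ( norm(sigma)/(1+M) + opnorm(Pperp_L P_V) * norm(sigma) ). -/
theorem stmt7 (n : ℕ) (hn : 1 ≤ n) (D : Matrix (Fin n) (Fin n) ℝ) (hD : IsSlutsky D)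
    (Mlow : ℝ) (hM : 0 < Mlow) (V : Submodule ℝ (Vec n)) (σ : Vec n) (hσ : σ ∈ V) :
    ∀ qh : Vec n,
      |-(inner ℝ qh (pDot D σ) : ℝ)| ≤
        ‖qh‖ * (‖σ‖ / (1 + Mlow) +
          ‖((1 : Vec n →L[ℝ] Vec n) - projCLM (eigSpan D Mlow)).comp (projCLM V)‖ * ‖σ‖) := by
  classical
  intro qh
  obtain ⟨hsymm, hpsd, hdiag⟩ := hD
  have hherm : D.IsHermitian := by simpa using hpsd.1.neg
  set b := hherm.eigenvectorBasis with hbdef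
  set μ := hherm.eigenvalues with hμdef
  -- eigen-equation
  have hT : ∀ i, Matrix.toEuclideanLin D (b i) = μ i • b i := by
    intro i
    apply (WithLp.equiv 2 (Fin n → ℝ)).injective
    simpa [Matrix.piLp_ofLp_toEuclideanLin, Matrix.toLin'_apply]
      using hherm.mulVec_eigenvectorBasis i
  -- eigenvalues nonpositive
  have hμ0 : ∀ i, μ i ≤ 0 := by
    intro i
    have h1 := hherm.eigenvalues_eq i
    have h2 := hpsd.dotProduct_mulVec_nonneg ⇑(b i)
    simp only [neg_mulVec, dotProduct_neg] at h2
    rw [hμdef, h1, RCLike.re_to_real]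
    simpa using h2
  -- (1 - D) is positive definite, hence invertible
  have hpd : (1 - D).PosDef := by
    have := (Matrix.PosDef.one (n := Fin n) (R := ℝ)).add_posSemidef hpsd
    simpa [sub_eq_add_neg] using this
  have hinv : (1 - D)⁻¹ * (1 - D) = 1 :=
    Matrix.nonsing_inv_mul _ (Matrix.isUnit_iff_isUnit_det _ |>.1 hpd.isUnit)
  set B := Matrix.toEuclideanLin (1 - D)⁻¹ with hBdef
  have hid : ∀ v : Vec n, Matrix.toEuclideanLin (1 : Matrix (Fin n) (Fin n) ℝ) v = v := by
    intro v
    apply (WithLp.equiv 2 (Fin n → ℝ)).injective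
    rw [WithLp.equiv_apply, WithLp.equiv_apply, Matrix.piLp_ofLp_toEuclideanLin, Matrix.toLin'_apply, Matrix.one_mulVec]
  have hBmul : ∀ v : Vec n, B (Matrix.toEuclideanLin (1 - D) v) = v := by
    intro v
    apply (WithLp.equiv 2 (Fin n → ℝ)).injective
    rw [hBdef, WithLp.equiv_apply, WithLp.equiv_apply, Matrix.piLp_ofLp_toEuclideanLin, Matrix.piLp_ofLp_toEuclideanLin,
      Matrix.toLin'_apply, Matrix.toLin'_apply, Matrix.mulVec_mulVec, hinv, Matrix.one_mulVec]
  have hμne : ∀ i, (1 : ℝ) - μ i ≠ 0 := fun i => by nlinarith [hμ0 i]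
  have hBb : ∀ i, B (b i) = (1 - μ i)⁻¹ • b i := by
    intro i
    have h1 : Matrix.toEuclideanLin (1 - D) (b i) = (1 - μ i) • b i := by
      have hms : Matrix.toEuclideanLin (1 - D) =
          Matrix.toEuclideanLin (1 : Matrix (Fin n) (Fin n) ℝ) - Matrix.toEuclideanLin D :=
        map_sub _ _ _
      rw [hms, LinearMap.sub_apply, hid, hT i, sub_smul, one_smul]
    have h2 : (1 - μ i) • B (b i) = b i := by
      rw [← _root_.map_smul, ← h1, hBmul]
    calc B (b i) = (1 - μ i)⁻¹ • ((1 - μ i) • B (b i)) := by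
          rw [smul_smul, inv_mul_cancel₀ (hμne i), one_smul]
      _ = (1 - μ i)⁻¹ • b i := by rw [h2]
  -- B is symmetric
  have hBsym : B.IsSymmetric :=
    (Matrix.isHermitian_iff_isSymmetric).1 hpd.isHermitian.inv
  have hcoef : ∀ (x : Vec n) i,
      (inner ℝ (b i) (B x) : ℝ) = (1 - μ i)⁻¹ * (inner ℝ (b i) x : ℝ) := by
    intro x i
    rw [← hBsym (b i) x, hBb i, real_inner_smul_left]
  -- bound 1 : ‖B x‖ ≤ ‖x‖ always
  have hB1 : ∀ x : Vec n, ‖B x‖ ≤ ‖x‖ := by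
    intro x
    have := stmt7_norm_le_of_coef b (B x) x 1 zero_le_one (fun i => by
      rw [hcoef x i, one_pow, one_mul, mul_pow]
      have ha : (1:ℝ) ≤ 1 - μ i := by linarith [hμ0 i]
      have hb : (1 - μ i)⁻¹ ≤ 1 := by
        have := inv_anti₀ one_pos ha
        simpa using this
      have hnn : (0:ℝ) ≤ (1 - μ i)⁻¹ := inv_nonneg.2 (by linarith)
      have h1 : ((1 - μ i)⁻¹) ^ 2 ≤ 1 := by nlinarith
      nlinarith [sq_nonneg (inner ℝ (b i) x : ℝ)])
    simpa using this
  -- bound 2 : on eigSpan, ‖B x‖ ≤ (1+Mlow)⁻¹ ‖x‖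
  have hTsym : (Matrix.toEuclideanLin D).IsSymmetric :=
    (Matrix.isHermitian_iff_isSymmetric).1 hherm
  have horth : ∀ i, |μ i| < Mlow → ∀ x ∈ eigSpan D Mlow, (inner ℝ (b i) x : ℝ) = 0 := by
    intro i hi x hx
    have hbmem : b i ∈ Module.End.eigenspace (Matrix.toEuclideanLin D) (μ i) :=
      Module.End.mem_eigenspace_iff.2 (hT i)
    have hle : eigSpan D Mlow ≤ (ℝ ∙ (b i))ᗮ := by
      refine iSup_le fun ν => iSup_le fun hν y hy => ?_
      rw [Submodule.mem_orthogonal]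
      intro u hu
      obtain ⟨c, rfl⟩ := Submodule.mem_span_singleton.1 hu
      have hne : μ i ≠ ν := fun h => absurd hν (by rw [← h]; exact not_le.2 hi)
      have h0 : (inner ℝ (b i) y : ℝ) =
          0 := hTsym.orthogonalFamily_eigenspaces hne ⟨b i, hbmem⟩ ⟨y, hy⟩
      rw [real_inner_smul_left, h0, mul_zero]
    have hx' := hle hx
    rw [Submodule.mem_orthogonal] at hx'
    exact hx' (b i) (Submodule.mem_span_singleton_self _)
  have hB2 : ∀ x ∈ eigSpan D Mlow, ‖B x‖ ≤ (1 + Mlow)⁻¹ * ‖x‖ := by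
    intro x hx
    refine stmt7_norm_le_of_coef b (B x) x _ (by positivity) fun i => ?_
    rw [hcoef x i, mul_pow]
    by_cases hcase : Mlow ≤ |μ i|
    · have h1 : μ i ≤ -Mlow := by
        have h0 := hμ0 i
        rw [abs_of_nonpos h0] at hcase
        linarith
      have h2 : (0:ℝ) < 1 + Mlow := by linarith
      have h3 : (1:ℝ) + Mlow ≤ 1 - μ i := by linarith
      have h4 : (1 - μ i)⁻¹ ≤ (1 + Mlow)⁻¹ := inv_anti₀ h2 h3
      have h5 : (0:ℝ) ≤ (1 - μ i)⁻¹ := inv_nonneg.2 (by linarith)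
      have h6 : ((1 - μ i)⁻¹) ^ 2 ≤ ((1 + Mlow)⁻¹) ^ 2 := by nlinarith
      nlinarith [sq_nonneg (inner ℝ (b i) x : ℝ)]
    · rw [horth i (not_le.1 hcase) x hx]
      simp
  -- projections
  set L := eigSpan D Mlow with hLdef
  set Pl := projCLM L with hPldef
  have hPlmem : (Pl σ : Vec n) ∈ L := by
    simp only [hPldef, projCLM, ContinuousLinearMap.coe_comp', Function.comp_apply,
      Submodule.coe_subtypeL', Submodule.coe_subtype]
    exact SetLike.coe_mem _
  have hPl_norm : ‖Pl σ‖ ≤ ‖σ‖ := by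
    have h1 : ‖Pl σ‖ = ‖L.orthogonalProjection σ‖ := rfl
    rw [h1]
    calc ‖L.orthogonalProjection σ‖ ≤ ‖L.orthogonalProjection‖ * ‖σ‖ :=
          (L.orthogonalProjection).le_opNorm σ
      _ ≤ 1 * ‖σ‖ := by
          apply mul_le_mul_of_nonneg_right (Submodule.orthogonalProjection_norm_le L) (norm_nonneg σ)
      _ = ‖σ‖ := one_mul _
  have hσV : projCLM V σ = σ := by
    simp only [projCLM, ContinuousLinearMap.coe_comp', Function.comp_apply,
      Submodule.coe_subtypeL', Submodule.coe_subtype]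
    exact (Submodule.starProjection_eq_self_iff (K := V)).2 hσ
  have hresid : σ - Pl σ =
      (((1 : Vec n →L[ℝ] Vec n) - Pl).comp (projCLM V)) σ := by
    simp [ContinuousLinearMap.comp_apply, hσV]
  have hresid_norm : ‖σ - Pl σ‖ ≤
      ‖((1 : Vec n →L[ℝ] Vec n) - Pl).comp (projCLM V)‖ * ‖σ‖ := by
    rw [hresid]
    exact (((1 : Vec n →L[ℝ] Vec n) - Pl).comp (projCLM V)).le_opNorm σ
  -- assemble
  have hsplit : B σ = B (Pl σ) + B (σ - Pl σ) := by
    rw [← map_add]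
    congr 1
    abel
  have hBσ : ‖B σ‖ ≤ ‖σ‖ / (1 + Mlow) +
      ‖((1 : Vec n →L[ℝ] Vec n) - Pl).comp (projCLM V)‖ * ‖σ‖ := by
    calc ‖B σ‖ ≤ ‖B (Pl σ)‖ + ‖B (σ - Pl σ)‖ := by rw [hsplit]; exact norm_add_le _ _
      _ ≤ (1 + Mlow)⁻¹ * ‖Pl σ‖ + ‖σ - Pl σ‖ :=
          add_le_add (hB2 _ hPlmem) (hB1 _)
      _ ≤ (1 + Mlow)⁻¹ * ‖σ‖ +
            ‖((1 : Vec n →L[ℝ] Vec n) - Pl).comp (projCLM V)‖ * ‖σ‖ := by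
          refine add_le_add ?_ hresid_norm
          exact mul_le_mul_of_nonneg_left hPl_norm (by positivity)
      _ = ‖σ‖ / (1 + Mlow) +
            ‖((1 : Vec n →L[ℝ] Vec n) - Pl).comp (projCLM V)‖ * ‖σ‖ := by
          rw [div_eq_inv_mul]
  have hinner : |-(inner ℝ qh (pDot D σ) : ℝ)| = |(inner ℝ qh (B σ) : ℝ)| := by
    have : pDot D σ = -(B σ) := rfl
    rw [this, inner_neg_right, neg_neg]
  rw [hinner]
  calc |(inner ℝ qh (B σ) : ℝ)| ≤ ‖qh‖ * ‖B σ‖ := abs_real_inner_le_norm _ _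
    _ ≤ ‖qh‖ * (‖σ‖ / (1 + Mlow) +
          ‖((1 : Vec n →L[ℝ] Vec n) - Pl).comp (projCLM V)‖ * ‖σ‖) :=
        mul_le_mul_of_nonneg_left hBσ (norm_nonneg qh)
end
end
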